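/- Fix ℓ > 0 and t₀ ∈ ℝ, and set C = exp(−π·e^{2t₀}/ℓ), so that 0 < C < 1. The image under Φ_ℓ of the set {(t,v,s) ∈ ℝ × ℂ × ℝ : t ≥ t₀} is exactly {(v,w) ∈ ℂ² : 0 < |w| ≤ C·exp(−π|v|²/ℓ)}. (This is the second assertion of Proposition 2.2 of the paper: projections of horoballs centered at the cusp point correspond to the subsets O_C of O.) -/

import Mathlib

/-- The cusp coordinate map `Φ_ℓ(t,v,s) = (v, exp(π(-e^{2t} - |v|² + 2is)/ℓ))`. -/
noncomputable def cuspΦ (ℓ t : ℝ) (v : ℂ) (s : ℝ) : ℂ × ℂ :=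
  (v, Complex.exp ((Real.pi : ℂ) *
        (-(Real.exp (2 * t) : ℂ) - ((‖v‖ : ℂ))^2 + 2 * Complex.I * (s : ℂ))
      / (ℓ : ℂ)))

lemma cuspΦ_exponent (ℓ t : ℝ) (v : ℂ) (s : ℝ) :
    (Real.pi : ℂ) *
        (-(Real.exp (2 * t) : ℂ) - ((‖v‖ : ℂ))^2 + 2 * Complex.I * (s : ℂ))
      / (ℓ : ℂ)
    = ((Real.pi * (-Real.exp (2 * t) - (‖v‖)^2) / ℓ : ℝ) : ℂ)
      + ((2 * Real.pi * s / ℓ : ℝ) : ℂ) * Complex.I := by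
  push_cast
  ring

lemma cuspΦ_abs (ℓ t : ℝ) (v : ℂ) (s : ℝ) :
    ‖(cuspΦ ℓ t v s).2‖
      = Real.exp (Real.pi * (-Real.exp (2 * t) - (‖v‖)^2) / ℓ) := by
  rw [cuspΦ, cuspΦ_exponent, Complex.norm_exp]
  congr 1
  simp only [Complex.add_re, Complex.mul_re, Complex.ofReal_re, Complex.ofReal_im,
    Complex.I_re, Complex.I_im]
  ring

lemma exp_split (ℓ t : ℝ) (v : ℂ) :
    Real.exp (Real.pi * (-Real.exp (2 * t) - (‖v‖)^2) / ℓ)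
    = Real.exp (-Real.pi * Real.exp (2 * t) / ℓ) *
        Real.exp (-Real.pi * (‖v‖)^2 / ℓ) := by
  rw [← Real.exp_add]
  ring_nf

/-- Horoballs `{t ≥ t₀}` correspond to the subsets
`O_C = {(v,w) : 0 < |w| ≤ C·exp(-π|v|²/ℓ)}` with `C = exp(-π·e^{2t₀}/ℓ) ∈ (0,1)`. -/
theorem cusp_chart_horoballs (ℓ t₀ : ℝ) (hℓ : 0 < ℓ) :
    0 < Real.exp (-Real.pi * Real.exp (2 * t₀) / ℓ)
    ∧ Real.exp (-Real.pi * Real.exp (2 * t₀) / ℓ) < 1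
    ∧ (fun p : ℝ × ℂ × ℝ => cuspΦ ℓ p.1 p.2.1 p.2.2) '' {p : ℝ × ℂ × ℝ | t₀ ≤ p.1}
        = {q : ℂ × ℂ | 0 < ‖q.2‖ ∧
            ‖q.2‖ ≤ Real.exp (-Real.pi * Real.exp (2 * t₀) / ℓ) *
              Real.exp (-Real.pi * (‖q.1‖)^2 / ℓ)} := by
  have hπ := Real.pi_pos
  have hℓ0 : ℓ ≠ 0 := ne_of_gt hℓ
  have hπ0 : Real.pi ≠ 0 := ne_of_gt hπ
  refine ⟨Real.exp_pos _, ?_, ?_⟩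
  · have h : -Real.pi * Real.exp (2 * t₀) / ℓ = -(Real.pi * Real.exp (2 * t₀) / ℓ) := by
      ring
    rw [Real.exp_lt_one_iff, h]
    have : 0 < Real.pi * Real.exp (2 * t₀) / ℓ :=
      div_pos (mul_pos hπ (Real.exp_pos _)) hℓ
    linarith
  · ext q
    simp only [Set.mem_image, Set.mem_setOf_eq]
    constructor
    · rintro ⟨⟨t, v', s⟩, ht, rfl⟩
      simp only [Set.mem_setOf_eq] at ht
      dsimp only
      rw [cuspΦ_abs, exp_split]
      have h1 : (cuspΦ ℓ t v' s).1 = v' := rfl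
      rw [h1]
      constructor
      · positivity
      · have h0 : Real.exp (2 * t₀) ≤ Real.exp (2 * t) := by
          rw [Real.exp_le_exp]; linarith
        have h2 : -Real.pi * Real.exp (2 * t) / ℓ ≤ -Real.pi * Real.exp (2 * t₀) / ℓ := by
          apply div_le_div_of_nonneg_right ?_ hℓ.le
          nlinarith
        exact mul_le_mul_of_nonneg_right (Real.exp_le_exp.mpr h2) (Real.exp_pos _).le
    · rintro ⟨hw0, hwle⟩
      set v := q.1 with hv
      set w := q.2 with hwdef
      set r := ‖w‖ with hr
      have hrpos : 0 < r := hw0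
      set A : ℝ := -ℓ * Real.log r / Real.pi - (‖v‖)^2 with hA
      have hlogr : Real.log r * ℓ ≤ -Real.pi * Real.exp (2 * t₀)
          + -Real.pi * (‖v‖)^2 := by
        have h := Real.log_le_log hrpos hwle
        rw [Real.log_mul (Real.exp_ne_zero _) (Real.exp_ne_zero _),
          Real.log_exp, Real.log_exp, ← add_div, le_div_iff₀ hℓ] at h
        linarith
      have hApos : Real.exp (2 * t₀) ≤ A := by
        rw [hA, le_sub_iff_add_le, le_div_iff₀ hπ]
        nlinarith
      have hApos' : 0 < A := lt_of_lt_of_le (Real.exp_pos _) hApos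
      set t : ℝ := Real.log A / 2 with htdef
      have hexpA : Real.exp (2 * t) = A := by
        rw [htdef, show 2 * (Real.log A / 2) = Real.log A by ring, Real.exp_log hApos']
      have htge : t₀ ≤ t := by
        have h := Real.log_le_log (Real.exp_pos _) hApos
        rw [Real.log_exp] at h
        linarith
      set s : ℝ := ℓ * Complex.arg w / (2 * Real.pi) with hs
      refine ⟨(t, v, s), htge, ?_⟩
      dsimp only
      have hfst : (cuspΦ ℓ t v s).1 = v := rfl
      have hsnd : (cuspΦ ℓ t v s).2 = w := by
        rw [cuspΦ, cuspΦ_exponent]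
        have hs' : ((2 * Real.pi * s / ℓ : ℝ) : ℂ) = (Complex.arg w : ℂ) := by
          norm_cast
          rw [hs]
          field_simp
        have hre : (Real.pi * (-Real.exp (2 * t) - (‖v‖)^2) / ℓ : ℝ)
            = Real.log r := by
          rw [hexpA, hA]
          field_simp
          ring
        rw [hre, hs', Complex.exp_add, ← Complex.ofReal_exp, Real.exp_log hrpos, hr]
        exact Complex.norm_mul_exp_arg_mul_I w
      have : cuspΦ ℓ t v s = (v, w) := Prod.ext hfst hsnd
      rw [this]
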